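/- For every formula A, intuitionistic logic proves Kr(A) ↔ G(A), i.e., the Krivine and Gödel–Gentzen negative translations are equivalent in intuitionistic logic. -/

import Mathlib

/-- Formulas of pure first-order predicate logic (de Bruijn indices;
terms are just variables, atoms are predicate symbols applied to variables). -/
inductive Formula : Type
  | bot : Formula
  | atom : ℕ → List ℕ → Formula
  | and : Formula → Formula → Formula
  | or : Formula → Formula → Formula
  | imp : Formula → Formula → Formula
  | all : Formula → Formula
  | ex : Formula → Formula

namespace Formula

def neg (A : Formula) : Formula := A.imp bot
def iff (A B : Formula) : Formula := (A.imp B).and (B.imp A)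

/-- Lift (shift by one) the free variables ≥ c. -/
def liftVar (c v : ℕ) : ℕ := if v < c then v else v + 1

def lift : ℕ → Formula → Formula
  | _, bot => bot
  | c, atom p ts => atom p (ts.map (liftVar c))
  | c, and A B => and (lift c A) (lift c B)
  | c, or A B => or (lift c A) (lift c B)
  | c, imp A B => imp (lift c A) (lift c B)
  | c, all A => all (lift (c+1) A)
  | c, ex A => ex (lift (c+1) A)

/-- Substitute the term (variable) `t` for the bound variable at depth `c`. -/
def substVar (c t v : ℕ) : ℕ := if v < c then v else if v = c then t + c else v - 1

def subst : ℕ → ℕ → Formula → Formula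
  | _, _, bot => bot
  | c, t, atom p ts => atom p (ts.map (substVar c t))
  | c, t, and A B => and (subst c t A) (subst c t B)
  | c, t, or A B => or (subst c t A) (subst c t B)
  | c, t, imp A B => imp (subst c t A) (subst c t B)
  | c, t, all A => all (subst (c+1) t A)
  | c, t, ex A => ex (subst (c+1) t A)

end Formula

/-- The three flavours of logic: minimal, intuitionistic, classical. -/
inductive Flavour : Type
  | min | int | cl
  deriving DecidableEq

/-- Natural deduction. `Prf f Γ A`: A is derivable from hypotheses Γ in
minimal/intuitionistic/classical first-order logic according to `f`. -/
inductive Prf : Flavour → Set Formula → Formula → Prop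
  | hyp {f : Flavour} {Γ : Set Formula} {A : Formula} : A ∈ Γ → Prf f Γ A
  | andI {f : Flavour} {Γ : Set Formula} {A B : Formula} : Prf f Γ A → Prf f Γ B → Prf f Γ (A.and B)
  | andE1 {f : Flavour} {Γ : Set Formula} {A B : Formula} : Prf f Γ (A.and B) → Prf f Γ A
  | andE2 {f : Flavour} {Γ : Set Formula} {A B : Formula} : Prf f Γ (A.and B) → Prf f Γ B
  | orI1 {f : Flavour} {Γ : Set Formula} {A B : Formula} : Prf f Γ A → Prf f Γ (A.or B)
  | orI2 {f : Flavour} {Γ : Set Formula} {A B : Formula} : Prf f Γ B → Prf f Γ (A.or B)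
  | orE {f : Flavour} {Γ : Set Formula} {A B C : Formula} : Prf f Γ (A.or B) → Prf f (insert A Γ) C →
      Prf f (insert B Γ) C → Prf f Γ C
  | impI {f : Flavour} {Γ : Set Formula} {A B : Formula} : Prf f (insert A Γ) B → Prf f Γ (A.imp B)
  | impE {f : Flavour} {Γ : Set Formula} {A B : Formula} : Prf f Γ (A.imp B) → Prf f Γ A → Prf f Γ B
  | allI {f : Flavour} {Γ : Set Formula} {A : Formula} : Prf f (Formula.lift 0 '' Γ) A → Prf f Γ (Formula.all A)
  | allE {f : Flavour} {Γ : Set Formula} {A : Formula} (t : ℕ) : Prf f Γ (Formula.all A) → Prf f Γ (A.subst 0 t)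
  | exI {f : Flavour} {Γ : Set Formula} {A : Formula} (t : ℕ) : Prf f Γ (A.subst 0 t) → Prf f Γ (Formula.ex A)
  | exE {f : Flavour} {Γ : Set Formula} {A B : Formula} : Prf f Γ (Formula.ex A) →
      Prf f (insert A (Formula.lift 0 '' Γ)) (B.lift 0) → Prf f Γ B
  | exfalso {f : Flavour} {Γ : Set Formula} {A : Formula} : f ≠ Flavour.min → Prf f Γ Formula.bot → Prf f Γ A
  | dne {f : Flavour} {Γ : Set Formula} {A : Formula} : f = Flavour.cl → Prf f Γ A.neg.neg → Prf f Γ A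

/-- The Gödel–Gentzen negative translation. -/
def G : Formula → Formula
  | .bot => .bot
  | .atom p ts => (Formula.atom p ts).neg.neg
  | .and A B => (G A).and (G B)
  | .or A B => ((G A).neg.and (G B).neg).neg
  | .imp A B => (G A).imp (G B)
  | .all A => .all (G A)
  | .ex A => (Formula.all (G A).neg).neg

/-- The negative fragment: ⊥, negated atoms, closed under ∧, →, ∀. -/
inductive NF : Formula → Prop
  | bot : NF Formula.bot
  | negAtom (p : ℕ) (ts : List ℕ) : NF (Formula.atom p ts).neg
  | and {A B} : NF A → NF B → NF (A.and B)
  | imp {A B} : NF A → NF B → NF (A.imp B)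
  | all {A} : NF A → NF (Formula.all A)

/-- The inner part of the Krivine translation. -/
def Kr' : Formula → Formula
  | .bot => Formula.bot.neg
  | .atom p ts => (Formula.atom p ts).neg
  | .and A B => (Kr' A).or (Kr' B)
  | .or A B => (Kr' A).and (Kr' B)
  | .imp A B => (Kr' A).neg.and (Kr' B)
  | .all A => .ex (Kr' A)
  | .ex A => (Formula.ex (Kr' A).neg).neg

/-- The Krivine negative translation Kr(A) = ¬Kr'(A). -/
def Kr (A : Formula) : Formula := (Kr' A).neg

section Aux

open Formula

lemma substVar_liftVar (c v : ℕ) :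
    Formula.substVar c 0 (Formula.liftVar (c+1) v) = v := by
  unfold Formula.liftVar Formula.substVar
  split_ifs <;> omega

lemma subst_lift : ∀ (A : Formula) (c : ℕ), (A.lift (c+1)).subst c 0 = A
  | .bot, _ => rfl
  | .atom p ts, c => by
      simp [Formula.lift, Formula.subst, List.map_map,
        Function.comp_def, substVar_liftVar]
  | .and A B, c => by
      simp [Formula.lift, Formula.subst, subst_lift A c, subst_lift B c]
  | .or A B, c => by
      simp [Formula.lift, Formula.subst, subst_lift A c, subst_lift B c]
  | .imp A B, c => by
      simp [Formula.lift, Formula.subst, subst_lift A c, subst_lift B c]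
  | .all A, c => by
      simp [Formula.lift, Formula.subst, subst_lift A (c+1)]
  | .ex A, c => by
      simp [Formula.lift, Formula.subst, subst_lift A (c+1)]

lemma Prf.weaken {f : Flavour} {Γ : Set Formula} {A : Formula}
    (h : Prf f Γ A) : ∀ {Δ : Set Formula}, Γ ⊆ Δ → Prf f Δ A := by
  induction h with
  | hyp h => exact fun s => .hyp (s h)
  | andI _ _ ih1 ih2 => exact fun s => .andI (ih1 s) (ih2 s)
  | andE1 _ ih => exact fun s => .andE1 (ih s)
  | andE2 _ ih => exact fun s => .andE2 (ih s)
  | orI1 _ ih => exact fun s => .orI1 (ih s)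
  | orI2 _ ih => exact fun s => .orI2 (ih s)
  | orE _ _ _ ih ih1 ih2 =>
      exact fun s => .orE (ih s) (ih1 (Set.insert_subset_insert s))
        (ih2 (Set.insert_subset_insert s))
  | impI _ ih => exact fun s => .impI (ih (Set.insert_subset_insert s))
  | impE _ _ ih1 ih2 => exact fun s => .impE (ih1 s) (ih2 s)
  | allI _ ih => exact fun s => .allI (ih (Set.image_mono s))
  | allE t _ ih => exact fun s => .allE t (ih s)
  | exI t _ ih => exact fun s => .exI t (ih s)
  | exE _ _ ih1 ih2 =>
      exact fun s => .exE (ih1 s)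
        (ih2 (Set.insert_subset_insert (Set.image_mono s)))
  | exfalso hne _ ih => exact fun s => .exfalso hne (ih s)
  | dne hc _ ih => exact fun s => .dne hc (ih s)

lemma Prf.hyp0 {f Γ} {A : Formula} : Prf f (insert A Γ) A :=
  .hyp (Set.mem_insert _ _)

lemma Prf.hyp1 {f Γ} {A B : Formula} : Prf f (insert B (insert A Γ)) A :=
  .hyp (Set.mem_insert_of_mem _ (Set.mem_insert _ _))

lemma Prf.hyp2 {f Γ} {A B C : Formula} :
    Prf f (insert C (insert B (insert A Γ))) A :=
  .hyp (Set.mem_insert_of_mem _ (Set.mem_insert_of_mem _ (Set.mem_insert _ _)))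

lemma Prf.hyp3 {f Γ} {A B C D : Formula} :
    Prf f (insert D (insert C (insert B (insert A Γ)))) A :=
  .hyp (by simp)

end Aux

/-- Krivine and Gödel–Gentzen are equivalent in intuitionistic logic. -/

theorem Kr_equiv_G (A : Formula) : Prf Flavour.int ∅ ((Kr A).iff (G A)) := by
  induction A with
  | bot =>
      refine Prf.andI (Prf.impI ?_) (Prf.impI ?_)
      · exact Prf.impE Prf.hyp0 (Prf.impI Prf.hyp0)
      · exact Prf.exfalso (by decide) Prf.hyp0
  | atom p ts =>
      exact Prf.andI (Prf.impI Prf.hyp0) (Prf.impI Prf.hyp0)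
  | and A B ihA ihB =>
      have iA1 : ∀ Γ, Prf Flavour.int Γ ((Kr' A).neg.imp (G A)) :=
        fun _ => (Prf.andE1 ihA).weaken (Set.empty_subset _)
      have iA2 : ∀ Γ, Prf Flavour.int Γ ((G A).imp (Kr' A).neg) :=
        fun _ => (Prf.andE2 ihA).weaken (Set.empty_subset _)
      have iB1 : ∀ Γ, Prf Flavour.int Γ ((Kr' B).neg.imp (G B)) :=
        fun _ => (Prf.andE1 ihB).weaken (Set.empty_subset _)
      have iB2 : ∀ Γ, Prf Flavour.int Γ ((G B).imp (Kr' B).neg) :=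
        fun _ => (Prf.andE2 ihB).weaken (Set.empty_subset _)
      refine Prf.andI (Prf.impI ?_) (Prf.impI ?_)
      · refine Prf.andI ?_ ?_
        · exact Prf.impE (iA1 _) (Prf.impI (Prf.impE Prf.hyp1 (Prf.orI1 Prf.hyp0)))
        · exact Prf.impE (iB1 _) (Prf.impI (Prf.impE Prf.hyp1 (Prf.orI2 Prf.hyp0)))
      · refine Prf.impI ?_
        refine Prf.orE Prf.hyp0 ?_ ?_
        · exact Prf.impE (Prf.impE (iA2 _) (Prf.andE1 Prf.hyp2)) Prf.hyp0
        · exact Prf.impE (Prf.impE (iB2 _) (Prf.andE2 Prf.hyp2)) Prf.hyp0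
  | or A B ihA ihB =>
      have iA1 : ∀ Γ, Prf Flavour.int Γ ((Kr' A).neg.imp (G A)) :=
        fun _ => (Prf.andE1 ihA).weaken (Set.empty_subset _)
      have iA2 : ∀ Γ, Prf Flavour.int Γ ((G A).imp (Kr' A).neg) :=
        fun _ => (Prf.andE2 ihA).weaken (Set.empty_subset _)
      have iB1 : ∀ Γ, Prf Flavour.int Γ ((Kr' B).neg.imp (G B)) :=
        fun _ => (Prf.andE1 ihB).weaken (Set.empty_subset _)
      have iB2 : ∀ Γ, Prf Flavour.int Γ ((G B).imp (Kr' B).neg) :=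
        fun _ => (Prf.andE2 ihB).weaken (Set.empty_subset _)
      refine Prf.andI (Prf.impI (Prf.impI ?_)) (Prf.impI (Prf.impI ?_))
      · -- Γ2 = {¬GA∧¬GB, ¬(KA∧KB)} ⊢ ⊥
        exact Prf.impE (Prf.andE1 Prf.hyp0)
          (Prf.impE (iA1 _) (Prf.impI (Prf.impE (Prf.andE2 Prf.hyp1)
            (Prf.impE (iB1 _) (Prf.impI (Prf.impE Prf.hyp3
              (Prf.andI Prf.hyp1 Prf.hyp0)))))))
      · -- Γ2 = {KA∧KB, ¬(¬GA∧¬GB)} ⊢ ⊥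
        exact Prf.impE Prf.hyp1 (Prf.andI
          (Prf.impI (Prf.impE (Prf.impE (iA2 _) Prf.hyp0) (Prf.andE1 Prf.hyp1)))
          (Prf.impI (Prf.impE (Prf.impE (iB2 _) Prf.hyp0) (Prf.andE2 Prf.hyp1))))
  | imp A B ihA ihB =>
      have iA1 : ∀ Γ, Prf Flavour.int Γ ((Kr' A).neg.imp (G A)) :=
        fun _ => (Prf.andE1 ihA).weaken (Set.empty_subset _)
      have iA2 : ∀ Γ, Prf Flavour.int Γ ((G A).imp (Kr' A).neg) :=
        fun _ => (Prf.andE2 ihA).weaken (Set.empty_subset _)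
      have iB1 : ∀ Γ, Prf Flavour.int Γ ((Kr' B).neg.imp (G B)) :=
        fun _ => (Prf.andE1 ihB).weaken (Set.empty_subset _)
      have iB2 : ∀ Γ, Prf Flavour.int Γ ((G B).imp (Kr' B).neg) :=
        fun _ => (Prf.andE2 ihB).weaken (Set.empty_subset _)
      refine Prf.andI (Prf.impI (Prf.impI ?_)) (Prf.impI (Prf.impI ?_))
      · -- Γ2 = {GA, ¬(¬KA∧KB)} ⊢ GB
        exact Prf.impE (iB1 _) (Prf.impI (Prf.impE Prf.hyp2
          (Prf.andI (Prf.impE (iA2 _) Prf.hyp1) Prf.hyp0)))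
      · -- Γ2 = {¬KA∧KB, GA→GB} ⊢ ⊥
        exact Prf.impE
          (Prf.impE (iB2 _) (Prf.impE Prf.hyp1
            (Prf.impE (iA1 _) (Prf.andE1 Prf.hyp0))))
          (Prf.andE2 Prf.hyp0)
  | all A ihA =>
      have iA1 : ∀ Γ, Prf Flavour.int Γ ((Kr' A).neg.imp (G A)) :=
        fun _ => (Prf.andE1 ihA).weaken (Set.empty_subset _)
      have iA2 : ∀ Γ, Prf Flavour.int Γ ((G A).imp (Kr' A).neg) :=
        fun _ => (Prf.andE2 ihA).weaken (Set.empty_subset _)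
      refine Prf.andI (Prf.impI ?_) (Prf.impI ?_)
      · -- Γ = {¬(ex KA)} ⊢ all (G A)
        refine Prf.allI ?_
        rw [Set.image_insert_eq, Set.image_empty]
        show Prf Flavour.int (insert ((Formula.ex ((Kr' A).lift 1)).neg) ∅) (G A)
        refine Prf.impE (iA1 _) (Prf.impI (Prf.impE Prf.hyp1 (Prf.exI 0 ?_)))
        rw [subst_lift]
        exact Prf.hyp0
      · -- Γ = {all (G A)} ⊢ ¬(ex KA)
        refine Prf.impI ?_
        refine Prf.exE (A := Kr' A) Prf.hyp0 ?_
        rw [Set.image_insert_eq, Set.image_insert_eq, Set.image_empty]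
        show Prf Flavour.int (insert (Kr' A) (insert (Formula.ex ((Kr' A).lift 1))
          (insert (Formula.all ((G A).lift 1)) ∅))) Formula.bot
        refine Prf.impE (Prf.impE (iA2 _) ?_) Prf.hyp0
        have h : Prf Flavour.int (insert (Kr' A) (insert (Formula.ex ((Kr' A).lift 1))
            (insert (Formula.all ((G A).lift 1)) ∅))) (Formula.all ((G A).lift 1)) :=
          Prf.hyp2
        simpa [subst_lift] using Prf.allE 0 h
  | ex A ihA =>
      have iA1 : ∀ Γ, Prf Flavour.int Γ ((Kr' A).neg.imp (G A)) :=
        fun _ => (Prf.andE1 ihA).weaken (Set.empty_subset _)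
      have iA2 : ∀ Γ, Prf Flavour.int Γ ((G A).imp (Kr' A).neg) :=
        fun _ => (Prf.andE2 ihA).weaken (Set.empty_subset _)
      refine Prf.andI (Prf.impI (Prf.impI ?_)) (Prf.impI (Prf.impI ?_))
      · -- Γ2 = {all ¬GA, ¬¬(ex ¬KA)} ⊢ ⊥
        refine Prf.impE Prf.hyp1 (Prf.impI ?_)
        refine Prf.exE (A := (Kr' A).neg) Prf.hyp0 ?_
        rw [Set.image_insert_eq, Set.image_insert_eq, Set.image_insert_eq,
          Set.image_empty]
        show Prf Flavour.int (insert ((Kr' A).neg)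
          (insert (Formula.ex (((Kr' A).lift 1).neg))
          (insert (Formula.all (((G A).lift 1).neg))
          (insert (((Formula.ex (((Kr' A).lift 1).neg)).neg).neg) ∅)))) Formula.bot
        refine Prf.impE ?_ (Prf.impE (iA1 _) Prf.hyp0)
        have h : Prf Flavour.int (insert ((Kr' A).neg)
            (insert (Formula.ex (((Kr' A).lift 1).neg))
            (insert (Formula.all (((G A).lift 1).neg))
            (insert (((Formula.ex (((Kr' A).lift 1).neg)).neg).neg) ∅))))
            (Formula.all (((G A).lift 1).neg)) := Prf.hyp2
        simpa [Formula.subst, Formula.neg, subst_lift] using Prf.allE 0 h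
      · -- Γ2 = {¬(ex ¬KA), ¬(all ¬GA)} ⊢ ⊥
        refine Prf.impE Prf.hyp1 (Prf.allI ?_)
        rw [Set.image_insert_eq, Set.image_insert_eq, Set.image_empty]
        show Prf Flavour.int (insert ((Formula.ex (((Kr' A).lift 1).neg)).neg)
          (insert ((Formula.all (((G A).lift 1).neg)).neg) ∅)) ((G A).neg)
        refine Prf.impI ?_
        refine Prf.impE Prf.hyp1 (Prf.exI 0 ?_)
        have h : Prf Flavour.int (insert (G A)
            (insert ((Formula.ex (((Kr' A).lift 1).neg)).neg)
            (insert ((Formula.all (((G A).lift 1).neg)).neg) ∅)))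
            ((Kr' A).neg) := Prf.impE (iA2 _) Prf.hyp0
        simpa [Formula.subst, Formula.neg, subst_lift] using h
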